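/- The function h(x) = (x − 1 + e^{−x})/x³ is strictly decreasing on (0, ∞). -/

import Mathlib

open Real Set

private lemma q_pos : ∀ x : ℝ, 0 < x → 0 < 1 - (1 - 2*x) * Real.exp x := by
  have hq : StrictMonoOn (fun x : ℝ => 1 - (1 - 2*x) * Real.exp x) (Ici 0) := by
    apply strictMonoOn_of_deriv_pos (convex_Ici 0)
    · fun_prop
    · intro x hx
      rw [interior_Ici] at hx
      have h1 : HasDerivAt (fun x : ℝ => (1:ℝ) - 2*x) (-2) x := by
        simpa using ((hasDerivAt_id x).const_mul (2:ℝ)).const_sub 1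
      have h2 := h1.mul (Real.hasDerivAt_exp x)
      have h3 := h2.const_sub (1:ℝ)
      rw [HasDerivAt.deriv (f := fun x : ℝ => 1 - (1 - 2*x) * Real.exp x) h3]
      have he := Real.exp_pos x
      nlinarith [mul_pos (mem_Ioi.mp hx) he]
  intro x hx
  have h0 : (fun x : ℝ => 1 - (1 - 2*x) * Real.exp x) 0 = 0 := by simp
  have := hq (self_mem_Ici) (le_of_lt hx) hx
  simpa [h0] using this

private lemma p_pos : ∀ x : ℝ, 0 < x → 0 < (x + 3) - (3 - 2*x) * Real.exp x := by
  have hp : StrictMonoOn (fun x : ℝ => (x + 3) - (3 - 2*x) * Real.exp x) (Ici 0) := by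
    apply strictMonoOn_of_deriv_pos (convex_Ici 0)
    · fun_prop
    · intro x hx
      rw [interior_Ici] at hx
      have h1 : HasDerivAt (fun x : ℝ => (3:ℝ) - 2*x) (-2) x := by
        simpa using ((hasDerivAt_id x).const_mul (2:ℝ)).const_sub 3
      have h2 := h1.mul (Real.hasDerivAt_exp x)
      have h4 : HasDerivAt (fun x : ℝ => x + 3) 1 x := (hasDerivAt_id x).add_const 3
      have h3 := h4.sub h2
      rw [HasDerivAt.deriv (f := fun x : ℝ => (x + 3) - (3 - 2*x) * Real.exp x) h3]
      have := q_pos x (mem_Ioi.mp hx)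
      nlinarith
  intro x hx
  have h0 : (fun x : ℝ => (x + 3) - (3 - 2*x) * Real.exp x) 0 = 0 := by simp
  have := hp (self_mem_Ici) (le_of_lt hx) hx
  simpa [h0] using this

private lemma g_neg : ∀ x : ℝ, 0 < x → 3 - 2*x - (x + 3) * Real.exp (-x) < 0 := by
  intro x hx
  have hp := p_pos x hx
  have he : Real.exp (-x) * Real.exp x = 1 := by
    rw [← Real.exp_add]; simp
  have hepos := Real.exp_pos (-x)
  nlinarith [mul_pos hepos hp]

/-- The function `h(x) = (x − 1 + e^{−x})/x³` is strictly decreasing on `(0, ∞)`. -/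
theorem strictAntiOn_mme_link :
    StrictAntiOn (fun x : ℝ => (x - 1 + Real.exp (-x)) / x ^ 3) (Set.Ioi (0 : ℝ)) := by
  apply strictAntiOn_of_deriv_neg (convex_Ioi 0)
  · apply ContinuousOn.div
    · fun_prop
    · fun_prop
    · intro x hx
      exact pow_ne_zero 3 (ne_of_gt (mem_Ioi.mp hx))
  · intro x hx
    rw [interior_Ioi] at hx
    have hx0 : (0:ℝ) < x := mem_Ioi.mp hx
    have hexp : HasDerivAt (fun x : ℝ => Real.exp (-x)) (-Real.exp (-x)) x := by
      simpa [Function.comp_def] using (Real.hasDerivAt_exp (-x)).comp x (hasDerivAt_neg x)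
    have hu : HasDerivAt (fun x : ℝ => x - 1 + Real.exp (-x)) (1 + -Real.exp (-x)) x :=
      ((hasDerivAt_id x).sub_const 1).add hexp
    have hv : HasDerivAt (fun x : ℝ => x ^ 3) (3 * x ^ 2) x := by
      simpa using hasDerivAt_pow 3 x
    have hd := hu.div hv (pow_ne_zero 3 (ne_of_gt hx0))
    rw [HasDerivAt.deriv (f := fun x : ℝ => (x - 1 + Real.exp (-x)) / x ^ 3) hd]
    apply div_neg_of_neg_of_pos
    · have hnum : (1 + -Real.exp (-x)) * x ^ 3 - (x - 1 + Real.exp (-x)) * (3 * x ^ 2)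
          = x ^ 2 * (3 - 2*x - (x + 3) * Real.exp (-x)) := by ring
      rw [hnum]
      exact mul_neg_of_pos_of_neg (pow_pos hx0 2) (g_neg x hx0)
    · positivity
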